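/- Let s : Fin m → Bool be a finite binary string (where `true` represents a used neon tube and `false` an unused one) containing at least one `true` entry, such that s has no two consecutive `false` entries and no three consecutive entries of the form `false, true, false`. If a denotes the number of `true` entries and b the number of `false` entries, then b ≤ ⌈(a+1)/2⌉, and consequently m = a + b ≤ 2a. -/

import Mathlib

/-- Combinatorial core of the Sandwiched Neon Tube argument: a binary string with
at least one `true`, no two consecutive `false`s and no `false,true,false` substring
has at most `⌈(a+1)/2⌉` many `false`s, where `a` is the number of `true`s. -/
theorem sandwiched_neon_tube_count (m : ℕ) (s : Fin m → Bool)
    (hT : ∃ i : Fin m, s i = true)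
    (h00 : ∀ (i : ℕ) (h1 : i < m) (h2 : i + 1 < m),
      ¬(s ⟨i, h1⟩ = false ∧ s ⟨i + 1, h2⟩ = false))
    (h010 : ∀ (i : ℕ) (h1 : i < m) (h2 : i + 1 < m) (h3 : i + 2 < m),
      ¬(s ⟨i, h1⟩ = false ∧ s ⟨i + 1, h2⟩ = true ∧ s ⟨i + 2, h3⟩ = false))
    (a b : ℕ)
    (ha : a = (Finset.univ.filter fun i : Fin m => s i = true).card)
    (hb : b = (Finset.univ.filter fun i : Fin m => s i = false).card) :
    b ≤ (a + 2) / 2 ∧ m = a + b ∧ m ≤ 2 * a := by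
  classical
  obtain ⟨i0, hi0⟩ := hT
  have hm : 0 < m := i0.pos
  -- gap lemma: two falses are at least 3 apart
  have gap : ∀ i j : Fin m, s i = false → s j = false → i.1 < j.1 → i.1 + 3 ≤ j.1 := by
    intro i j hi hj hlt
    by_contra hcon
    push_neg at hcon
    have hj1 : j.1 = i.1 + 1 ∨ j.1 = i.1 + 2 := by omega
    rcases hj1 with h1 | h2
    · have h2' : i.1 + 1 < m := by omega
      refine h00 i.1 i.isLt h2' ⟨hi, ?_⟩
      have : (⟨i.1 + 1, h2'⟩ : Fin m) = j := Fin.ext h1.symm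
      rw [this]; exact hj
    · have hlt2 : i.1 + 2 < m := by omega
      have hlt1 : i.1 + 1 < m := by omega
      have hjeq : (⟨i.1 + 2, hlt2⟩ : Fin m) = j := Fin.ext h2.symm
      cases hmid : s ⟨i.1 + 1, hlt1⟩ with
      | false => exact h00 i.1 i.isLt hlt1 ⟨hi, hmid⟩
      | true => exact h010 i.1 i.isLt hlt1 hlt2 ⟨hi, hmid, by rw [hjeq]; exact hj⟩
  set T := Finset.univ.filter (fun i : Fin m => s i = true) with hTdef
  set F := Finset.univ.filter (fun i : Fin m => s i = false) with hFdef
  set S := F.filter (fun i : Fin m => i.1 + 2 < m) with hSdef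
  have hmemS : ∀ i : Fin m, i ∈ S → s i = false ∧ i.1 + 2 < m := by
    intro i hi
    simp only [hSdef, hFdef, Finset.mem_filter, Finset.mem_univ, true_and] at hi
    tauto
  -- each i ∈ S gets two private trues
  have hST : 2 * S.card ≤ T.card := by
    have hinj := Finset.card_le_card_of_injOn
      (f := fun p : Fin m × Bool =>
        (⟨min (p.1.1 + (if p.2 then 1 else 2)) (m - 1), by omega⟩ : Fin m))
      (s := S ×ˢ (Finset.univ : Finset Bool)) (t := T) ?_ ?_
    · simpa [Finset.card_product, mul_comm] using hinj
    · intro p hp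
      rw [Finset.mem_coe, Finset.mem_product] at hp
      obtain ⟨hfalse, hlt⟩ := hmemS p.1 hp.1
      have hc : (if p.2 then 1 else 2) = 1 ∨ (if p.2 then 1 else 2) = 2 := by
        cases p.2 <;> simp
      have hval : min (p.1.1 + (if p.2 then 1 else 2)) (m - 1)
          = p.1.1 + (if p.2 then 1 else 2) := by omega
      simp only [hTdef, Finset.mem_coe, Finset.mem_filter, Finset.mem_univ, true_and]
      by_contra hnot
      rw [Bool.not_eq_true] at hnot
      have := gap p.1 _ hfalse hnot (by simp only [hval]; omega)
      simp only [hval] at this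
      omega
    · intro p hp q hq heq
      rw [Finset.mem_coe, Finset.mem_product] at hp hq
      obtain ⟨hpf, hplt⟩ := hmemS p.1 hp.1
      obtain ⟨hqf, hqlt⟩ := hmemS q.1 hq.1
      have hcp : (if p.2 then 1 else 2) = 1 ∨ (if p.2 then 1 else 2) = 2 := by
        cases p.2 <;> simp
      have hcq : (if q.2 then 1 else 2) = 1 ∨ (if q.2 then 1 else 2) = 2 := by
        cases q.2 <;> simp
      have hvals : min (p.1.1 + (if p.2 then 1 else 2)) (m - 1)
          = min (q.1.1 + (if q.2 then 1 else 2)) (m - 1) := congrArg Fin.val heq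
      have heqv : p.1.1 + (if p.2 then 1 else 2) = q.1.1 + (if q.2 then 1 else 2) := by
        omega
      have hv : p.1.1 = q.1.1 := by
        rcases lt_trichotomy p.1.1 q.1.1 with h | h | h
        · have := gap p.1 q.1 hpf hqf h; omega
        · exact h
        · have := gap q.1 p.1 hqf hpf h; omega
      have h1 : p.1 = q.1 := Fin.ext hv
      have h2 : p.2 = q.2 := by
        have hthis : (if p.2 then 1 else 2 : ℕ) = (if q.2 then 1 else 2) := by omega
        clear heq hvals heqv
        cases hp2 : p.2 <;> cases hq2 : q.2
        · rfl
        · rw [hp2, hq2] at hthis; simp at hthis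
        · rw [hp2, hq2] at hthis; simp at hthis
        · rfl
      exact Prod.ext h1 h2
  -- at most one false is missing from S
  have hFS : F.card ≤ S.card + 1 := by
    have hone : (F \ S).card ≤ 1 := by
      rw [Finset.card_le_one]
      intro x hx y hy
      rw [Finset.mem_sdiff] at hx hy
      have hxf : s x = false := by
        have := hx.1; simp only [hFdef, Finset.mem_filter, Finset.mem_univ, true_and] at this
        exact this
      have hyf : s y = false := by
        have := hy.1; simp only [hFdef, Finset.mem_filter, Finset.mem_univ, true_and] at this
        exact this
      have hxl : ¬ (x.1 + 2 < m) := by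
        intro h; exact hx.2 (by simp [hSdef, hx.1, h])
      have hyl : ¬ (y.1 + 2 < m) := by
        intro h; exact hy.2 (by simp [hSdef, hy.1, h])
      by_contra hne
      have hvne : x.1 ≠ y.1 := fun h => hne (Fin.ext h)
      rcases lt_trichotomy x.1 y.1 with h | h | h
      · have := gap x y hxf hyf h; omega
      · exact hvne h
      · have := gap y x hyf hxf h; omega
    have hsub : F ⊆ S ∪ (F \ S) := by
      intro x hx
      by_cases hx2 : x ∈ S <;> simp [Finset.mem_union, Finset.mem_sdiff, hx, hx2]
    calc F.card ≤ (S ∪ (F \ S)).card := Finset.card_le_card hsub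
      _ ≤ S.card + (F \ S).card := Finset.card_union_le _ _
      _ ≤ S.card + 1 := by omega
  have ha1 : 1 ≤ a := by
    rw [ha]
    have : i0 ∈ T := by simp [hTdef, hi0]
    exact Finset.card_pos.mpr ⟨i0, this⟩
  have hab : a + b = m := by
    rw [ha, hb]
    have hcongr : F = Finset.univ.filter (fun i : Fin m => ¬ (s i = true)) := by
      rw [hFdef]
      apply Finset.filter_congr
      intro x _
      simp
    rw [hcongr]
    rw [Finset.card_filter_add_card_filter_not, Finset.card_univ, Fintype.card_fin]
  rw [ha] at *
  rw [hb] at *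
  refine ⟨by omega, by omega, by omega⟩
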